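/- Keep the notation of the divergence theorem for the IPFP sequence, with modified marginals a' and b'. The two limit matrices L_even = lim_n X_{2n} and L_odd = lim_n X_{2n+1} have the same support Σ, and Σ equals the union of the supports of all matrices in Γ(a',b,X_0) ∪ Γ(a,b',X_0). Moreover, if X'_0 denotes the matrix obtained from X_0 by setting to 0 all entries outside Σ, then the IPFP started from X'_0 (with marginals a and b) has the same limit points: the even subsequence converges to L_even and the odd subsequence converges to L_odd. -/

import Mathlib

open Filter Topology

namespace IPFP

variable {p q : ℕ}

/-- Row sums `X(i,+)`. -/
noncomputable def rowSum (X : Matrix (Fin p) (Fin q) ℝ) (i : Fin p) : ℝ := ∑ j, X i j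

/-- Column sums `X(+,j)`. -/
noncomputable def colSum (X : Matrix (Fin p) (Fin q) ℝ) (j : Fin q) : ℝ := ∑ i, X i j

/-- `R_i(X) = X(i,+)/a_i`. -/
noncomputable def Rrat (a : Fin p → ℝ) (X : Matrix (Fin p) (Fin q) ℝ) (i : Fin p) : ℝ :=
  rowSum X i / a i

/-- `C_j(X) = X(+,j)/b_j`. -/
noncomputable def Crat (b : Fin q → ℝ) (X : Matrix (Fin p) (Fin q) ℝ) (j : Fin q) : ℝ :=
  colSum X j / b j

/-- `T_R(X)(i,j) = X(i,j)/R_i(X)`. -/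
noncomputable def TR (a : Fin p → ℝ) (X : Matrix (Fin p) (Fin q) ℝ) :
    Matrix (Fin p) (Fin q) ℝ :=
  fun i j => X i j / Rrat a X i

/-- `T_C(X)(i,j) = X(i,j)/C_j(X)`. -/
noncomputable def TC (b : Fin q → ℝ) (X : Matrix (Fin p) (Fin q) ℝ) :
    Matrix (Fin p) (Fin q) ℝ :=
  fun i j => X i j / Crat b X j

/-- The IPFP sequence: `X_0 = X0`, `X_{2n+1} = T_R(X_{2n})`, `X_{2n+2} = T_C(X_{2n+1})`. -/
noncomputable def ipfp (a : Fin p → ℝ) (b : Fin q → ℝ) (X0 : Matrix (Fin p) (Fin q) ℝ) :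
    ℕ → Matrix (Fin p) (Fin q) ℝ
  | 0 => X0
  | n + 1 => if Even n then TR a (ipfp a b X0 n) else TC b (ipfp a b X0 n)

/-- Membership in `Γ₀`: nonnegative entries, positive row and column sums. -/
def memGamma0 (X : Matrix (Fin p) (Fin q) ℝ) : Prop :=
  (∀ i j, 0 ≤ X i j) ∧ (∀ i, 0 < rowSum X i) ∧ (∀ j, 0 < colSum X j)

/-- Membership in `Γ₁`: member of `Γ₀` with total sum `1`. -/
def memGamma1 (X : Matrix (Fin p) (Fin q) ℝ) : Prop :=
  memGamma0 X ∧ ∑ i, ∑ j, X i j = 1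

/-- Membership in `Γ(a,b)`: member of `Γ₀` with row marginals `a` and column marginals `b`. -/
def memGamma (a : Fin p → ℝ) (b : Fin q → ℝ) (X : Matrix (Fin p) (Fin q) ℝ) : Prop :=
  memGamma0 X ∧ (∀ i, rowSum X i = a i) ∧ (∀ j, colSum X j = b j)

/-- `Supp(X) ⊆ Supp(Y)`. -/
def suppSubset (X Y : Matrix (Fin p) (Fin q) ℝ) : Prop :=
  ∀ i j, 0 < X i j → 0 < Y i j

/-- Membership in `Γ(a,b,X0)`: member of `Γ(a,b)` with support contained in `Supp(X0)`. -/
def memGammaSub (a : Fin p → ℝ) (b : Fin q → ℝ) (X0 X : Matrix (Fin p) (Fin q) ℝ) : Prop :=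
  memGamma a b X ∧ suppSubset X X0

/-- Relative entropy (I-divergence) `D(Y‖X) = Σ_{(i,j) ∈ Supp X} Y(i,j)·ln(Y(i,j)/X(i,j))`
(finite expression; it agrees with the relative entropy whenever `Supp Y ⊆ Supp X`,
with the convention `0·ln 0 = 0`). -/
noncomputable def relEnt (Y X : Matrix (Fin p) (Fin q) ℝ) : ℝ :=
  ∑ i, ∑ j, if 0 < X i j then Y i j * Real.log (Y i j / X i j) else 0

/-- A real sequence converges to `l` at an at least geometric rate:
it tends to `l` and `limsup_n |x_n − l|^{1/n} < 1`. -/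
noncomputable def geomSeq (x : ℕ → ℝ) (l : ℝ) : Prop :=
  Tendsto x atTop (nhds l) ∧
    Filter.limsup (fun n : ℕ => |x n - l| ^ ((n : ℝ)⁻¹)) atTop < 1

/-- A matrix sequence converges to `L` at an at least geometric rate (using the
`ℓ¹` norm on entries): it tends to `L` and `limsup_n ‖X_n − L‖^{1/n} < 1`. -/
noncomputable def geomMat (X : ℕ → Matrix (Fin p) (Fin q) ℝ)
    (L : Matrix (Fin p) (Fin q) ℝ) : Prop :=
  Tendsto X atTop (nhds L) ∧
    Filter.limsup (fun n : ℕ => (∑ i, ∑ j, |X n i j - L i j|) ^ ((n : ℝ)⁻¹)) atTop < 1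

end IPFP

namespace IPFP

variable {p q : ℕ}

lemma sum_sum_eq_rowSum (X : Matrix (Fin p) (Fin q) ℝ) :
    ∑ i, ∑ j, X i j = ∑ i, rowSum X i := rfl

lemma sum_sum_eq_colSum (X : Matrix (Fin p) (Fin q) ℝ) :
    ∑ i, ∑ j, X i j = ∑ j, colSum X j := Finset.sum_comm

lemma exists_pos_of_sum_pos {α : Type*} [Fintype α] (f : α → ℝ) (h : 0 < ∑ i, f i) :
    ∃ i, 0 < f i := by
  by_contra hc
  push_neg at hc
  exact absurd (Finset.sum_nonpos (fun i _ => hc i)) (not_le.mpr h)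

lemma entry_le_total (X : Matrix (Fin p) (Fin q) ℝ) (h0 : ∀ i j, 0 ≤ X i j) (i : Fin p)
    (j : Fin q) : X i j ≤ ∑ i, ∑ j, X i j := by
  calc X i j ≤ ∑ j', X i j' := Finset.single_le_sum (fun j' _ => h0 i j') (Finset.mem_univ j)
  _ ≤ ∑ i', ∑ j', X i' j' :=
      Finset.single_le_sum (fun i' _ => Finset.sum_nonneg fun j' _ => h0 i' j')
        (Finset.mem_univ i)

lemma klogk_lower {x y : ℝ} (hx : 0 < x) (hy : 0 ≤ y) : y - x ≤ y * Real.log (y / x) := by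
  rcases eq_or_lt_of_le hy with h | h
  · simp [← h]; positivity
  · have h1 : Real.log (x / y) ≤ x / y - 1 := Real.log_le_sub_one_of_pos (by positivity)
    have h2 : Real.log (x / y) = - Real.log (y / x) := by
      rw [← Real.log_inv]; congr 1; field_simp
    rw [h2] at h1
    have h3 : 1 - x / y ≤ Real.log (y / x) := by linarith
    have h4 := mul_le_mul_of_nonneg_left h3 hy
    have h5 : y * (1 - x / y) = y - x := by field_simp
    linarith

lemma klogk_eq {x y : ℝ} (hx : 0 < x) (hy : 0 < y) (h : y * Real.log (y / x) = y - x) :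
    y = x := by
  by_contra hne
  have hne' : x / y ≠ 1 := by
    intro e
    rw [div_eq_one_iff_eq (ne_of_gt hy)] at e
    exact hne e.symm
  have h1 : Real.log (x / y) < x / y - 1 := Real.log_lt_sub_one_of_pos (by positivity) hne'
  have h2 : Real.log (x / y) = - Real.log (y / x) := by
    rw [← Real.log_inv]; congr 1; field_simp
  rw [h2] at h1
  have h3 : 1 - x / y < Real.log (y / x) := by linarith
  have h4 := (mul_lt_mul_iff_right₀ hy).mpr h3
  have h5 : y * (1 - x / y) = y - x := by field_simp
  linarith

lemma log_upper {x c : ℝ} (hx : 0 < x) (hc : 0 < c) :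
    Real.log x ≤ x / c - 1 + Real.log c := by
  have h1 : Real.log (x / c) ≤ x / c - 1 := Real.log_le_sub_one_of_pos (by positivity)
  rw [Real.log_div (ne_of_gt hx) (ne_of_gt hc)] at h1
  linarith

lemma g_lower {t : ℝ} (ht : 0 < t) : (Real.sqrt t - 1) ^ 2 ≤ t - 1 - Real.log t := by
  have hs : 0 < Real.sqrt t := Real.sqrt_pos.mpr ht
  have h1 : Real.log (Real.sqrt t) ≤ Real.sqrt t - 1 := Real.log_le_sub_one_of_pos hs
  have h2 : Real.log (Real.sqrt t) = Real.log t / 2 := Real.log_sqrt ht.le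
  have h3 : Real.sqrt t ^ 2 = t := Real.sq_sqrt (le_of_lt ht)
  nlinarith

lemma tendsto_one_of_sub_log (t : ℕ → ℝ) (ht : ∀ n, 0 < t n)
    (h : Filter.Tendsto (fun n => t n - 1 - Real.log (t n)) Filter.atTop (nhds 0)) :
    Filter.Tendsto t Filter.atTop (nhds 1) := by
  have hsq : Filter.Tendsto (fun n => (Real.sqrt (t n) - 1) ^ 2) Filter.atTop (nhds 0) :=
    squeeze_zero (fun n => by positivity) (fun n => g_lower (ht n)) h
  have habs : Filter.Tendsto (fun n => |Real.sqrt (t n) - 1|) Filter.atTop (nhds 0) := by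
    have := (Real.continuous_sqrt.tendsto 0).comp hsq
    simpa [Function.comp_def, Real.sqrt_sq_eq_abs, Real.sqrt_zero] using this
  have hsub : Filter.Tendsto (fun n => Real.sqrt (t n) - 1) Filter.atTop (nhds 0) :=
    (tendsto_zero_iff_abs_tendsto_zero _).mpr habs
  have hsqrt : Filter.Tendsto (fun n => Real.sqrt (t n)) Filter.atTop (nhds 1) := by
    have := hsub.add (tendsto_const_nhds (x := (1:ℝ)))
    simpa using this
  have := hsqrt.mul hsqrt
  simp only [one_mul] at this
  refine this.congr (fun n => ?_)
  exact Real.mul_self_sqrt (le_of_lt (ht n))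

end IPFP

namespace IPFP

variable {p q : ℕ} {a : Fin p → ℝ} {b : Fin q → ℝ}

lemma rowSum_TR' {X : Matrix (Fin p) (Fin q) ℝ} (ha : ∀ i, 0 < a i) (hX : memGamma0 X)
    (i : Fin p) : rowSum (TR a X) i = a i := by
  have hr : rowSum X i ≠ 0 := ne_of_gt (hX.2.1 i)
  have hR : Rrat a X i ≠ 0 := ne_of_gt (div_pos (hX.2.1 i) (ha i))
  show ∑ j, X i j / Rrat a X i = a i
  rw [← Finset.sum_div]
  show rowSum X i / Rrat a X i = a i
  rw [Rrat, div_div_eq_mul_div, mul_comm, mul_div_assoc, div_self hr, mul_one]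

lemma TR_pos_iff {X : Matrix (Fin p) (Fin q) ℝ} (ha : ∀ i, 0 < a i) (hX : memGamma0 X)
    (i : Fin p) (j : Fin q) : 0 < TR a X i j ↔ 0 < X i j := by
  have hR : 0 < Rrat a X i := div_pos (hX.2.1 i) (ha i)
  constructor
  · intro h
    have := mul_pos h hR
    rwa [TR, div_mul_cancel₀ _ (ne_of_gt hR)] at this
  · exact fun h => div_pos h hR

lemma TR_nonneg {X : Matrix (Fin p) (Fin q) ℝ} (ha : ∀ i, 0 < a i) (hX : memGamma0 X)
    (i : Fin p) (j : Fin q) : 0 ≤ TR a X i j :=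
  div_nonneg (hX.1 i j) (le_of_lt (div_pos (hX.2.1 i) (ha i)))

lemma memGamma0_TR {X : Matrix (Fin p) (Fin q) ℝ} (ha : ∀ i, 0 < a i) (hX : memGamma0 X) :
    memGamma0 (TR a X) := by
  refine ⟨TR_nonneg ha hX, fun i => ?_, fun j => ?_⟩
  · rw [rowSum_TR' ha hX i]; exact ha i
  · obtain ⟨i, hi⟩ := exists_pos_of_sum_pos _ (hX.2.2 j)
    exact Finset.sum_pos' (fun i' _ => TR_nonneg ha hX i' j)
      ⟨i, Finset.mem_univ i, (TR_pos_iff ha hX i j).mpr hi⟩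

lemma colSum_TC' {X : Matrix (Fin p) (Fin q) ℝ} (hb : ∀ j, 0 < b j) (hX : memGamma0 X)
    (j : Fin q) : colSum (TC b X) j = b j := by
  have hr : colSum X j ≠ 0 := ne_of_gt (hX.2.2 j)
  show ∑ i, X i j / Crat b X j = b j
  rw [← Finset.sum_div]
  show colSum X j / Crat b X j = b j
  rw [Crat, div_div_eq_mul_div, mul_comm, mul_div_assoc, div_self hr, mul_one]

lemma TC_pos_iff {X : Matrix (Fin p) (Fin q) ℝ} (hb : ∀ j, 0 < b j) (hX : memGamma0 X)
    (i : Fin p) (j : Fin q) : 0 < TC b X i j ↔ 0 < X i j := by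
  have hC : 0 < Crat b X j := div_pos (hX.2.2 j) (hb j)
  constructor
  · intro h
    have := mul_pos h hC
    rwa [TC, div_mul_cancel₀ _ (ne_of_gt hC)] at this
  · exact fun h => div_pos h hC

lemma TC_nonneg {X : Matrix (Fin p) (Fin q) ℝ} (hb : ∀ j, 0 < b j) (hX : memGamma0 X)
    (i : Fin p) (j : Fin q) : 0 ≤ TC b X i j :=
  div_nonneg (hX.1 i j) (le_of_lt (div_pos (hX.2.2 j) (hb j)))

lemma memGamma0_TC {X : Matrix (Fin p) (Fin q) ℝ} (hb : ∀ j, 0 < b j) (hX : memGamma0 X) :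
    memGamma0 (TC b X) := by
  refine ⟨TC_nonneg hb hX, fun i => ?_, fun j => ?_⟩
  · obtain ⟨j, hj⟩ := exists_pos_of_sum_pos _ (hX.2.1 i)
    exact Finset.sum_pos' (fun j' _ => TC_nonneg hb hX i j')
      ⟨j, Finset.mem_univ j, (TC_pos_iff hb hX i j).mpr hj⟩
  · rw [colSum_TC' hb hX j]; exact hb j

lemma ipfp_even_succ (Z0 : Matrix (Fin p) (Fin q) ℝ) (n : ℕ) :
    ipfp a b Z0 (2*n+1) = TR a (ipfp a b Z0 (2*n)) := by
  rw [ipfp, if_pos (even_two_mul n)]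

lemma ipfp_odd_succ (Z0 : Matrix (Fin p) (Fin q) ℝ) (n : ℕ) :
    ipfp a b Z0 (2*n+2) = TC b (ipfp a b Z0 (2*n+1)) := by
  rw [show 2*n+2 = (2*n+1)+1 from rfl, ipfp,
    if_neg (by simp [Nat.even_add_one, parity_simps])]

lemma ipfp_basics (ha : ∀ i, 0 < a i) (hb : ∀ j, 0 < b j) (Z0 : Matrix (Fin p) (Fin q) ℝ)
    (hZ0 : memGamma0 Z0) (n : ℕ) :
    memGamma0 (ipfp a b Z0 n) ∧ ∀ i j, (0 < ipfp a b Z0 n i j ↔ 0 < Z0 i j) := by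
  induction n with
  | zero => exact ⟨hZ0, fun i j => Iff.rfl⟩
  | succ n ih =>
    rw [ipfp]
    by_cases hn : Even n
    · rw [if_pos hn]
      exact ⟨memGamma0_TR ha ih.1,
        fun i j => (TR_pos_iff ha ih.1 i j).trans (ih.2 i j)⟩
    · rw [if_neg hn]
      exact ⟨memGamma0_TC hb ih.1,
        fun i j => (TC_pos_iff hb ih.1 i j).trans (ih.2 i j)⟩

lemma rowSum_ipfp_odd (ha : ∀ i, 0 < a i) (hb : ∀ j, 0 < b j)
    (Z0 : Matrix (Fin p) (Fin q) ℝ) (hZ0 : memGamma0 Z0) (n : ℕ) (i : Fin p) :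
    rowSum (ipfp a b Z0 (2*n+1)) i = a i := by
  rw [ipfp_even_succ]
  exact rowSum_TR' ha (ipfp_basics ha hb Z0 hZ0 (2*n)).1 i

lemma colSum_ipfp_even (ha : ∀ i, 0 < a i) (hb : ∀ j, 0 < b j)
    (Z0 : Matrix (Fin p) (Fin q) ℝ) (hZ0 : memGamma0 Z0) (n : ℕ) (j : Fin q) :
    colSum (ipfp a b Z0 (2*n+2)) j = b j := by
  rw [ipfp_odd_succ]
  exact colSum_TC' hb (ipfp_basics ha hb Z0 hZ0 (2*n+1)).1 j

lemma total_ipfp_odd (ha : ∀ i, 0 < a i) (hb : ∀ j, 0 < b j)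
    (Z0 : Matrix (Fin p) (Fin q) ℝ) (hZ0 : memGamma0 Z0) (n : ℕ) :
    ∑ i, ∑ j, ipfp a b Z0 (2*n+1) i j = ∑ i, a i := by
  rw [sum_sum_eq_rowSum]
  exact Finset.sum_congr rfl fun i _ => rowSum_ipfp_odd ha hb Z0 hZ0 n i

lemma total_ipfp_even_succ (ha : ∀ i, 0 < a i) (hb : ∀ j, 0 < b j)
    (Z0 : Matrix (Fin p) (Fin q) ℝ) (hZ0 : memGamma0 Z0) (n : ℕ) :
    ∑ i, ∑ j, ipfp a b Z0 (2*n+2) i j = ∑ j, b j := by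
  rw [sum_sum_eq_colSum]
  exact Finset.sum_congr rfl fun j _ => colSum_ipfp_even ha hb Z0 hZ0 n j

end IPFP

namespace IPFP

variable {p q : ℕ} {a : Fin p → ℝ} {b : Fin q → ℝ}

lemma relEnt_TR {X W : Matrix (Fin p) (Fin q) ℝ} (ha : ∀ i, 0 < a i) (hX : memGamma0 X)
    (hW0 : ∀ i j, 0 ≤ W i j) (hWX : ∀ i j, 0 < W i j → 0 < X i j) :
    relEnt W (TR a X) = relEnt W X + ∑ i, rowSum W i * Real.log (Rrat a X i) := by
  unfold relEnt
  have hrw : ∀ i, rowSum W i * Real.log (Rrat a X i)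
      = ∑ j, W i j * Real.log (Rrat a X i) := fun i => Finset.sum_mul _ _ _
  simp only [hrw]
  rw [← Finset.sum_add_distrib]
  refine Finset.sum_congr rfl fun i _ => ?_
  rw [← Finset.sum_add_distrib]
  refine Finset.sum_congr rfl fun j _ => ?_
  have hR : 0 < Rrat a X i := div_pos (hX.2.1 i) (ha i)
  by_cases hx : 0 < X i j
  · have hTR : 0 < TR a X i j := div_pos hx hR
    rw [if_pos hTR, if_pos hx]
    by_cases hw : 0 < W i j
    · have h1 : W i j / TR a X i j = W i j / X i j * Rrat a X i := by
        rw [TR, div_div_eq_mul_div]; ring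
      rw [h1, Real.log_mul (ne_of_gt (div_pos hw hx)) (ne_of_gt hR)]
      ring
    · have hw0 : W i j = 0 := le_antisymm (not_lt.mp hw) (hW0 i j)
      rw [hw0]; simp
  · have hw0 : W i j = 0 := by
      by_contra hc
      exact hx (hWX i j (lt_of_le_of_ne (hW0 i j) (Ne.symm hc)))
    have hx0 : X i j = 0 := le_antisymm (not_lt.mp hx) (hX.1 i j)
    have hTR : ¬ 0 < TR a X i j := by rw [TR, hx0, zero_div]; exact lt_irrefl 0
    rw [if_neg hTR, if_neg hx, hw0]; simp

lemma relEnt_TC {X W : Matrix (Fin p) (Fin q) ℝ} (hb : ∀ j, 0 < b j) (hX : memGamma0 X)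
    (hW0 : ∀ i j, 0 ≤ W i j) (hWX : ∀ i j, 0 < W i j → 0 < X i j) :
    relEnt W (TC b X) = relEnt W X + ∑ j, colSum W j * Real.log (Crat b X j) := by
  unfold relEnt
  have hrw : ∀ j, colSum W j * Real.log (Crat b X j)
      = ∑ i, W i j * Real.log (Crat b X j) := fun j => Finset.sum_mul _ _ _
  simp only [hrw]
  have hcomm : (∑ j, ∑ i, W i j * Real.log (Crat b X j))
      = ∑ i, ∑ j, W i j * Real.log (Crat b X j) := Finset.sum_comm
  rw [hcomm, ← Finset.sum_add_distrib]
  refine Finset.sum_congr rfl fun i _ => ?_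
  rw [← Finset.sum_add_distrib]
  refine Finset.sum_congr rfl fun j _ => ?_
  have hC : 0 < Crat b X j := div_pos (hX.2.2 j) (hb j)
  by_cases hx : 0 < X i j
  · have hTC : 0 < TC b X i j := div_pos hx hC
    rw [if_pos hTC, if_pos hx]
    by_cases hw : 0 < W i j
    · have h1 : W i j / TC b X i j = W i j / X i j * Crat b X j := by
        rw [TC, div_div_eq_mul_div]; ring
      rw [h1, Real.log_mul (ne_of_gt (div_pos hw hx)) (ne_of_gt hC)]
      ring
    · have hw0 : W i j = 0 := le_antisymm (not_lt.mp hw) (hW0 i j)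
      rw [hw0]; simp
  · have hw0 : W i j = 0 := by
      by_contra hc
      exact hx (hWX i j (lt_of_le_of_ne (hW0 i j) (Ne.symm hc)))
    have hx0 : X i j = 0 := le_antisymm (not_lt.mp hx) (hX.1 i j)
    have hTC : ¬ 0 < TC b X i j := by rw [TC, hx0, zero_div]; exact lt_irrefl 0
    rw [if_neg hTC, if_neg hx, hw0]; simp

lemma relEnt_ipfp_step (ha : ∀ i, 0 < a i) (hb : ∀ j, 0 < b j)
    (Z0 : Matrix (Fin p) (Fin q) ℝ) (hZ0 : memGamma0 Z0) (W : Matrix (Fin p) (Fin q) ℝ)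
    (hW0 : ∀ i j, 0 ≤ W i j) (hWZ : ∀ i j, 0 < W i j → 0 < Z0 i j) (n : ℕ) :
    relEnt W (ipfp a b Z0 (2*n+2)) = relEnt W (ipfp a b Z0 (2*n))
      + ∑ i, rowSum W i * Real.log (Rrat a (ipfp a b Z0 (2*n)) i)
      + ∑ j, colSum W j * Real.log (Crat b (ipfp a b Z0 (2*n+1)) j) := by
  have h2n := ipfp_basics ha hb Z0 hZ0 (2*n)
  have h2n1 := ipfp_basics ha hb Z0 hZ0 (2*n+1)
  rw [ipfp_odd_succ, relEnt_TC hb h2n1.1 hW0 (fun i j hw => (h2n1.2 i j).mpr (hWZ i j hw)),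
    ipfp_even_succ, relEnt_TR ha h2n.1 hW0 (fun i j hw => (h2n.2 i j).mpr (hWZ i j hw))]

lemma relEnt_ipfp_const (ha : ∀ i, 0 < a i) (hb : ∀ j, 0 < b j)
    (Z0 : Matrix (Fin p) (Fin q) ℝ) (hZ0 : memGamma0 Z0)
    (W W' : Matrix (Fin p) (Fin q) ℝ)
    (hW0 : ∀ i j, 0 ≤ W i j) (hW'0 : ∀ i j, 0 ≤ W' i j)
    (hWZ : ∀ i j, 0 < W i j → 0 < Z0 i j) (hW'Z : ∀ i j, 0 < W' i j → 0 < Z0 i j)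
    (hrow : ∀ i, rowSum W i = rowSum W' i) (hcol : ∀ j, colSum W j = colSum W' j) (n : ℕ) :
    relEnt W (ipfp a b Z0 (2*n)) - relEnt W' (ipfp a b Z0 (2*n))
      = relEnt W Z0 - relEnt W' Z0 := by
  induction n with
  | zero => rfl
  | succ n ih =>
    rw [show 2*(n+1) = 2*n+2 from rfl,
      relEnt_ipfp_step ha hb Z0 hZ0 W hW0 hWZ n,
      relEnt_ipfp_step ha hb Z0 hZ0 W' hW'0 hW'Z n]
    have e1 : ∑ i, rowSum W i * Real.log (Rrat a (ipfp a b Z0 (2*n)) i)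
        = ∑ i, rowSum W' i * Real.log (Rrat a (ipfp a b Z0 (2*n)) i) :=
      Finset.sum_congr rfl fun i _ => by rw [hrow i]
    have e2 : ∑ j, colSum W j * Real.log (Crat b (ipfp a b Z0 (2*n+1)) j)
        = ∑ j, colSum W' j * Real.log (Crat b (ipfp a b Z0 (2*n+1)) j) :=
      Finset.sum_congr rfl fun j _ => by rw [hcol j]
    rw [e1, e2]
    linarith [ih]

end IPFP

namespace IPFP

open Filter Topology

variable {p q : ℕ}

lemma relEnt_self (W : Matrix (Fin p) (Fin q) ℝ) : relEnt W W = 0 := by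
  unfold relEnt
  refine Finset.sum_eq_zero fun i _ => Finset.sum_eq_zero fun j _ => ?_
  by_cases h : 0 < W i j
  · rw [if_pos h, div_self (ne_of_gt h), Real.log_one, mul_zero]
  · rw [if_neg h]

lemma relEnt_tendsto (W L : Matrix (Fin p) (Fin q) ℝ) (Z : ℕ → Matrix (Fin p) (Fin q) ℝ)
    (hW0 : ∀ i j, 0 ≤ W i j)
    (hZ : ∀ i j, Tendsto (fun n => Z n i j) atTop (nhds (L i j)))
    (hpos : ∀ i j, 0 < W i j → ∀ n, 0 < Z n i j)
    (hLpos : ∀ i j, 0 < W i j → 0 < L i j) :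
    Tendsto (fun n => relEnt W (Z n)) atTop (nhds (relEnt W L)) := by
  unfold relEnt
  apply tendsto_finset_sum
  intro i _
  apply tendsto_finset_sum
  intro j _
  rcases lt_or_ge 0 (W i j) with hw | hw
  · rw [if_pos (hLpos i j hw)]
    have hdiv : Tendsto (fun n => W i j / Z n i j) atTop (nhds (W i j / L i j)) :=
      tendsto_const_nhds.div (hZ i j) (ne_of_gt (hLpos i j hw))
    have hlog := ((Real.continuousAt_log
      (ne_of_gt (div_pos hw (hLpos i j hw)))).tendsto).comp hdiv
    have hmul := hlog.const_mul (W i j)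
    exact hmul.congr fun n => (if_pos (hpos i j hw n)).symm
  · have hw0 : W i j = 0 := le_antisymm hw (hW0 i j)
    have h1 : ∀ n, (if 0 < Z n i j then W i j * Real.log (W i j / Z n i j) else 0) = 0 := by
      intro n; rw [hw0]; simp
    have h2 : (if 0 < L i j then W i j * Real.log (W i j / L i j) else 0) = 0 := by
      rw [hw0]; simp
    rw [h2]
    exact tendsto_const_nhds.congr fun n => (h1 n).symm

lemma relEnt_ge_sub (W V : Matrix (Fin p) (Fin q) ℝ) (hW0 : ∀ i j, 0 ≤ W i j)
    (hV0 : ∀ i j, 0 ≤ V i j) (hs : ∀ i j, 0 < W i j → 0 < V i j) :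
    (∑ i, ∑ j, W i j) - (∑ i, ∑ j, V i j) ≤ relEnt W V := by
  have key : ∀ i j, W i j - V i j
      ≤ (if 0 < V i j then W i j * Real.log (W i j / V i j) else 0) := by
    intro i j
    by_cases h : 0 < V i j
    · rw [if_pos h]; exact klogk_lower h (hW0 i j)
    · have hV : V i j = 0 := le_antisymm (not_lt.mp h) (hV0 i j)
      have hW : W i j = 0 := by
        by_contra hc
        exact h (hs i j (lt_of_le_of_ne (hW0 i j) (Ne.symm hc)))
      rw [if_neg h, hV, hW]; simp
  calc (∑ i, ∑ j, W i j) - (∑ i, ∑ j, V i j) = ∑ i, ∑ j, (W i j - V i j) := by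
        rw [← Finset.sum_sub_distrib]
        exact Finset.sum_congr rfl fun i _ => (Finset.sum_sub_distrib _ _).symm
    _ ≤ relEnt W V := Finset.sum_le_sum fun i _ => Finset.sum_le_sum fun j _ => key i j

lemma relEnt_lower (S X : Matrix (Fin p) (Fin q) ℝ) (hS0 : ∀ i j, 0 ≤ S i j)
    (hX1 : ∀ i j, X i j ≤ 1) (i0 : Fin p) (j0 : Fin q) (hpos : 0 < X i0 j0) :
    S i0 j0 * Real.log (S i0 j0 / X i0 j0) - ((q : ℝ) + p * q) ≤ relEnt S X := by
  set t : Fin p → Fin q → ℝ :=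
    fun i j => if 0 < X i j then S i j * Real.log (S i j / X i j) else 0 with ht
  have hterm : ∀ i j, -1 ≤ t i j := by
    intro i j
    by_cases h : 0 < X i j
    · have := klogk_lower h (hS0 i j)
      have h1 : -1 ≤ S i j - X i j := by
        have := hS0 i j; have := hX1 i j; linarith
      rw [ht]; simp only [if_pos h]
      linarith
    · rw [ht]; simp only [if_neg h]; norm_num
  have hrowge : ∀ i, -(q : ℝ) ≤ ∑ j, t i j := by
    intro i
    calc -(q:ℝ) = ∑ _j : Fin q, (-1 : ℝ) := by simp
    _ ≤ ∑ j, t i j := Finset.sum_le_sum fun j _ => hterm i j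
  have hrow0 : t i0 j0 - (q : ℝ) ≤ ∑ j, t i0 j := by
    have hsplit : t i0 j0 + ∑ j ∈ Finset.univ.erase j0, t i0 j = ∑ j, t i0 j :=
      Finset.add_sum_erase _ _ (Finset.mem_univ j0)
    have hbound : -(q:ℝ) ≤ ∑ j ∈ Finset.univ.erase j0, t i0 j := by
      calc -(q:ℝ) ≤ -((Finset.univ.erase j0).card : ℝ) := by
            have := Finset.card_erase_le (a := j0) (s := (Finset.univ : Finset (Fin q)))
            have h2 : ((Finset.univ.erase j0).card : ℝ) ≤ (q : ℝ) := by
              exact_mod_cast le_trans this (by simp)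
            linarith
      _ = ∑ _j ∈ Finset.univ.erase j0, (-1 : ℝ) := by
            rw [Finset.sum_const, nsmul_eq_mul]; ring
      _ ≤ _ := Finset.sum_le_sum fun j _ => hterm i0 j
    linarith
  have htot : (t i0 j0 - (q:ℝ)) - (p:ℝ) * q ≤ ∑ i, ∑ j, t i j := by
    have hsplit : (∑ j, t i0 j) + ∑ i ∈ Finset.univ.erase i0, (∑ j, t i j)
        = ∑ i, ∑ j, t i j := Finset.add_sum_erase _ (fun i => ∑ j, t i j) (Finset.mem_univ i0)
    have hbound : -((p:ℝ) * q) ≤ ∑ i ∈ Finset.univ.erase i0, (∑ j, t i j) := by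
      calc -((p:ℝ)*q) ≤ ((Finset.univ.erase i0).card : ℝ) * (-(q:ℝ)) := by
            have := Finset.card_erase_le (a := i0) (s := (Finset.univ : Finset (Fin p)))
            have h2 : ((Finset.univ.erase i0).card : ℝ) ≤ (p : ℝ) := by
              exact_mod_cast le_trans this (by simp)
            have hq0 : (0:ℝ) ≤ (q:ℝ) := by positivity
            nlinarith
      _ = ∑ _i ∈ Finset.univ.erase i0, (-(q:ℝ)) := by
            rw [Finset.sum_const, nsmul_eq_mul]
      _ ≤ _ := Finset.sum_le_sum fun i _ => hrowge i
    linarith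
  have hfin : t i0 j0 = S i0 j0 * Real.log (S i0 j0 / X i0 j0) := by
    rw [ht]; simp only [if_pos hpos]
  unfold relEnt
  rw [← hfin]
  linarith

end IPFP


open IPFP

/-- Keep the data of the divergence theorem, with modified marginals
`a'`, `b'` and limits `L_even = lim X_{2n}`, `L_odd = lim X_{2n+1}`. Then `L_even` and
`L_odd` have the same support `Σ`, which equals the union of the supports of all
matrices in `Γ(a',b,X_0) ∪ Γ(a,b',X_0)`; moreover, if `X'_0` is obtained from `X_0` by
setting to `0` all entries outside `Σ`, the IPFP started from `X'_0` (with marginals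
`a` and `b`) has the same limit points `L_even` and `L_odd`. -/
theorem ipfp_modified_initial_matrix
    (p q : ℕ) (hp : 2 ≤ p) (hq : 2 ≤ q)
    (a : Fin p → ℝ) (b : Fin q → ℝ)
    (ha : ∀ i, 0 < a i) (hb : ∀ j, 0 < b j)
    (hsa : ∑ i, a i = 1) (hsb : ∑ j, b j = 1)
    (X0 : Matrix (Fin p) (Fin q) ℝ) (hX0 : memGamma1 X0)
    (r : ℕ) (hr : 0 < r) (hrpq : r ≤ min p q)
    (I : Fin r → Finset (Fin p)) (J : Fin r → Finset (Fin q))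
    (hI : ∀ i : Fin p, ∃! k, i ∈ I k) (hIne : ∀ k, (I k).Nonempty)
    (hJ : ∀ j : Fin q, ∃! k, j ∈ J k) (hJne : ∀ k, (J k).Nonempty)
    (lam : Fin r → ℝ)
    (hlam : ∀ k, lam k = (∑ j ∈ J k, b j) / ∑ i ∈ I k, a i)
    (hR : ∀ k, ∀ i ∈ I k,
      Tendsto (fun n => Rrat a (ipfp a b X0 (2 * n)) i) atTop (nhds (lam k)))
    (hC : ∀ k, ∀ j ∈ J k,
      Tendsto (fun n => Crat b (ipfp a b X0 (2 * n + 1)) j) atTop (nhds ((lam k)⁻¹)))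
    (a' : Fin p → ℝ) (ha' : ∀ k, ∀ i ∈ I k, a' i = lam k * a i)
    (b' : Fin q → ℝ) (hb' : ∀ k, ∀ j ∈ J k, b' j = (lam k)⁻¹ * b j)
    (Leven Lodd : Matrix (Fin p) (Fin q) ℝ)
    (hEven : Tendsto (fun n => ipfp a b X0 (2 * n)) atTop (nhds Leven))
    (hOdd : Tendsto (fun n => ipfp a b X0 (2 * n + 1)) atTop (nhds Lodd))
    (X0' : Matrix (Fin p) (Fin q) ℝ)
    (hX0' : ∀ i j, X0' i j = if 0 < Leven i j then X0 i j else 0) :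
    (∀ i j, 0 < Leven i j ↔ 0 < Lodd i j) ∧
    (∀ i j, 0 < Leven i j ↔
      ∃ S : Matrix (Fin p) (Fin q) ℝ,
        (memGammaSub a' b X0 S ∨ memGammaSub a b' X0 S) ∧ 0 < S i j) ∧
    Tendsto (fun n => ipfp a b X0' (2 * n)) atTop (nhds Leven) ∧
    Tendsto (fun n => ipfp a b X0' (2 * n + 1)) atTop (nhds Lodd) := by
  classical
  have hG0 : memGamma0 X0 := hX0.1
  have hbas := ipfp_basics ha hb X0 hG0
  have hnn : ∀ n i j, 0 ≤ ipfp a b X0 n i j := fun n => (hbas n).1.1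
  have hsupp : ∀ n i j, (0 < ipfp a b X0 n i j ↔ 0 < X0 i j) := fun n => (hbas n).2
  -- class maps
  choose ki hki hkiu using hI
  choose kj hkj hkju using hJ
  set lami : Fin p → ℝ := fun i => lam (ki i) with hlami
  set lamj : Fin q → ℝ := fun j => lam (kj j) with hlamjdef
  have hlampos : ∀ k, 0 < lam k := by
    intro k
    rw [hlam k]
    exact div_pos (Finset.sum_pos (fun j _ => hb j) (hJne k))
      (Finset.sum_pos (fun i _ => ha i) (hIne k))
  have ha'' : ∀ i, a' i = lami i * a i := fun i => ha' (ki i) i (hki i)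
  have hb'' : ∀ j, b' j = (lamj j)⁻¹ * b j := fun j => hb' (kj j) j (hkj j)
  have hIfib : ∀ k, I k = Finset.univ.filter (fun i => ki i = k) := by
    intro k; ext i
    simp only [Finset.mem_filter, Finset.mem_univ, true_and]
    constructor
    · intro h; exact (hkiu i k h).symm
    · rintro rfl; exact hki i
  have hJfib : ∀ k, J k = Finset.univ.filter (fun j => kj j = k) := by
    intro k; ext j
    simp only [Finset.mem_filter, Finset.mem_univ, true_and]
    constructor
    · intro h; exact (hkju j k h).symm
    · rintro rfl; exact hkj j
  have hsump : ∀ f : Fin p → ℝ, ∑ k, ∑ i ∈ I k, f i = ∑ i, f i := by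
    intro f
    calc ∑ k, ∑ i ∈ I k, f i
        = ∑ k, ∑ i ∈ Finset.univ.filter (fun i => ki i = k), f i :=
          Finset.sum_congr rfl fun k _ => by rw [hIfib k]
    _ = ∑ i, f i := Finset.sum_fiberwise _ _ _
  have hsumq : ∀ f : Fin q → ℝ, ∑ k, ∑ j ∈ J k, f j = ∑ j, f j := by
    intro f
    calc ∑ k, ∑ j ∈ J k, f j
        = ∑ k, ∑ j ∈ Finset.univ.filter (fun j => kj j = k), f j :=
          Finset.sum_congr rfl fun k _ => by rw [hJfib k]
    _ = ∑ j, f j := Finset.sum_fiberwise _ _ _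
  have hlamIk : ∀ k, ∀ i ∈ I k, lami i = lam k := by
    intro k i hik
    rw [hlami]
    exact (congrArg lam (hkiu i k hik)).symm
  have hlamJk : ∀ k, ∀ j ∈ J k, lamj j = lam k := by
    intro k j hjk
    rw [hlamjdef]
    exact (congrArg lam (hkju j k hjk)).symm
  have hbJ : ∀ k, lam k * ∑ i ∈ I k, a i = ∑ j ∈ J k, b j := by
    intro k
    rw [hlam k]
    exact div_mul_cancel₀ _ (ne_of_gt (Finset.sum_pos (fun i _ => ha i) (hIne k)))
  have hK1 : ∑ i, lami i * a i = 1 := by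
    rw [← hsump (fun i => lami i * a i)]
    have hstep : ∀ k, ∑ i ∈ I k, lami i * a i = ∑ j ∈ J k, b j := by
      intro k
      rw [show ∑ i ∈ I k, lami i * a i = ∑ i ∈ I k, lam k * a i from
        Finset.sum_congr rfl fun i hik => by rw [hlamIk k i hik], ← Finset.mul_sum]
      exact hbJ k
    rw [Finset.sum_congr rfl fun k _ => hstep k, hsumq (fun j => b j)]
    exact hsb
  have hK2 : ∑ i, lami i * a i * Real.log (lami i) = ∑ j, b j * Real.log (lamj j) := by
    rw [← hsump (fun i => lami i * a i * Real.log (lami i)),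
      ← hsumq (fun j => b j * Real.log (lamj j))]
    refine Finset.sum_congr rfl fun k _ => ?_
    have h1 : ∑ i ∈ I k, lami i * a i * Real.log (lami i)
        = (lam k * ∑ i ∈ I k, a i) * Real.log (lam k) := by
      rw [Finset.mul_sum, Finset.sum_mul]
      exact Finset.sum_congr rfl fun i hik => by rw [hlamIk k i hik]
    have h2 : ∑ j ∈ J k, b j * Real.log (lamj j)
        = (∑ j ∈ J k, b j) * Real.log (lam k) := by
      rw [Finset.sum_mul]
      exact Finset.sum_congr rfl fun j hjk => by rw [hlamJk k j hjk]
    rw [h1, h2, hbJ k]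
  -- entrywise limits
  have hEvenE : ∀ i j, Tendsto (fun n => ipfp a b X0 (2*n) i j) atTop (nhds (Leven i j)) := by
    intro i j
    exact (tendsto_pi_nhds.mp ((tendsto_pi_nhds.mp hEven) i)) j
  have hOddE : ∀ i j, Tendsto (fun n => ipfp a b X0 (2*n+1) i j) atTop (nhds (Lodd i j)) := by
    intro i j
    exact (tendsto_pi_nhds.mp ((tendsto_pi_nhds.mp hOdd) i)) j
  have hRlim : ∀ i, Tendsto (fun n => Rrat a (ipfp a b X0 (2*n)) i) atTop (nhds (lami i)) :=
    fun i => hR (ki i) i (hki i)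
  have hClim : ∀ j, Tendsto (fun n => Crat b (ipfp a b X0 (2*n+1)) j) atTop
      (nhds ((lamj j)⁻¹)) := fun j => hC (kj j) j (hkj j)
  have hlamipos : ∀ i, 0 < lami i := fun i => hlampos (ki i)
  have hlamjpos : ∀ j, 0 < lamj j := fun j => hlampos (kj j)
  have hrowLeven : ∀ i, rowSum Leven i = lami i * a i := by
    intro i
    have t1 : Tendsto (fun n => rowSum (ipfp a b X0 (2*n)) i) atTop
        (nhds (rowSum Leven i)) := tendsto_finset_sum _ (fun j _ => hEvenE i j)
    have t2 : Tendsto (fun n => rowSum (ipfp a b X0 (2*n)) i) atTop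
        (nhds (lami i * a i)) := by
      have h2 := (hRlim i).const_mul (a i)
      have h3 : ∀ n, a i * Rrat a (ipfp a b X0 (2*n)) i = rowSum (ipfp a b X0 (2*n)) i := by
        intro n
        rw [Rrat, mul_comm, div_mul_cancel₀ _ (ne_of_gt (ha i))]
      refine Tendsto.congr (fun n => h3 n) ?_
      have : a i * lami i = lami i * a i := mul_comm _ _
      rw [← this]
      exact h2
    exact tendsto_nhds_unique t1 t2
  have hcolLeven : ∀ j, colSum Leven j = b j := by
    intro j
    have t1 : Tendsto (fun n => colSum (ipfp a b X0 (2*n)) j) atTop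
        (nhds (colSum Leven j)) := tendsto_finset_sum _ (fun i _ => hEvenE i j)
    have t1' : Tendsto (fun n => colSum (ipfp a b X0 (2*(n+1))) j) atTop
        (nhds (colSum Leven j)) := t1.comp (tendsto_add_atTop_nat 1)
    have t2 : ∀ n, colSum (ipfp a b X0 (2*(n+1))) j = b j := fun n =>
      colSum_ipfp_even ha hb X0 hG0 n j
    exact tendsto_nhds_unique t1' (tendsto_const_nhds.congr fun n => (t2 n).symm)
  have hLoddEq : ∀ i j, Lodd i j = Leven i j / lami i := by
    intro i j
    have t2 : Tendsto (fun n => ipfp a b X0 (2*n+1) i j) atTop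
        (nhds (Leven i j / lami i)) := by
      have hfun : ∀ n, ipfp a b X0 (2*n+1) i j
          = ipfp a b X0 (2*n) i j / Rrat a (ipfp a b X0 (2*n)) i := fun n => by
        rw [ipfp_even_succ]; rfl
      exact Tendsto.congr (fun n => (hfun n).symm)
        ((hEvenE i j).div (hRlim i) (ne_of_gt (hlamipos i)))
    exact tendsto_nhds_unique (hOddE i j) t2
  have hL0 : ∀ i j, 0 ≤ Leven i j := fun i j =>
    ge_of_tendsto (hEvenE i j) (Filter.Eventually.of_forall fun n => hnn _ i j)
  have hLodd0 : ∀ i j, 0 ≤ Lodd i j := fun i j => by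
    rw [hLoddEq i j]
    exact div_nonneg (hL0 i j) (le_of_lt (hlamipos i))
  have hLX0 : ∀ i j, 0 < Leven i j → 0 < X0 i j := by
    intro i j h
    obtain ⟨n, hn⟩ := ((hEvenE i j).eventually (eventually_gt_nhds h)).exists
    exact (hsupp _ i j).mp hn
  have hG1 : ∀ i j, (0 < Leven i j ↔ 0 < Lodd i j) := by
    intro i j
    rw [hLoddEq i j]
    constructor
    · intro h; exact div_pos h (hlamipos i)
    · intro h
      by_contra hc
      rw [le_antisymm (not_lt.mp hc) (hL0 i j), zero_div] at h
      exact lt_irrefl 0 h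
  have hLoddX0 : ∀ i j, 0 < Lodd i j → 0 < X0 i j := fun i j h =>
    hLX0 i j ((hG1 i j).mpr h)
  have hclass : ∀ i j, 0 < Leven i j → lami i = lamj j := by
    intro i j h
    have t1 : Tendsto (fun n => ipfp a b X0 (2*(n+1)) i j) atTop (nhds (Leven i j)) :=
      (hEvenE i j).comp (tendsto_add_atTop_nat 1)
    have t2 : Tendsto (fun n => ipfp a b X0 (2*(n+1)) i j) atTop
        (nhds (Leven i j / lami i / (lamj j)⁻¹)) := by
      have hfun : ∀ n, ipfp a b X0 (2*(n+1)) i j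
          = ipfp a b X0 (2*n) i j / Rrat a (ipfp a b X0 (2*n)) i
            / Crat b (ipfp a b X0 (2*n+1)) j := by
        intro n
        rw [show (2*(n+1)) = 2*n+2 from rfl, ipfp_odd_succ]
        show ipfp a b X0 (2*n+1) i j / Crat b (ipfp a b X0 (2*n+1)) j = _
        rw [ipfp_even_succ]
        rfl
      exact Tendsto.congr (fun n => (hfun n).symm)
        (((hEvenE i j).div (hRlim i) (ne_of_gt (hlamipos i))).div (hClim j)
          (inv_ne_zero (ne_of_gt (hlamjpos j))))
    have heq := tendsto_nhds_unique t1 t2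
    have h3 : Leven i j * lami i = Leven i j * lamj j := by
      field_simp at heq
      rw [eq_div_iff (ne_of_gt (hlamipos i))] at heq
      rw [one_mul] at heq; rw [heq]
    exact mul_left_cancel₀ (ne_of_gt h) h3
  have hLevenMem : memGammaSub a' b X0 Leven := by
    refine ⟨⟨⟨hL0, fun i => ?_, fun j => ?_⟩, fun i => ?_, fun j => hcolLeven j⟩, hLX0⟩
    · rw [hrowLeven i]; exact mul_pos (hlamipos i) (ha i)
    · rw [hcolLeven j]; exact hb j
    · rw [hrowLeven i, ha'' i]
  have htotLeven : ∑ i, ∑ j, Leven i j = 1 := by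
    rw [sum_sum_eq_rowSum, Finset.sum_congr rfl fun i _ => hrowLeven i]
    exact hK1
  have hrowLodd : ∀ i, rowSum Lodd i = a i := by
    intro i
    have t1 : Tendsto (fun n => rowSum (ipfp a b X0 (2*n+1)) i) atTop
        (nhds (rowSum Lodd i)) := tendsto_finset_sum _ (fun j _ => hOddE i j)
    have t2 : ∀ n, rowSum (ipfp a b X0 (2*n+1)) i = a i := fun n =>
      rowSum_ipfp_odd ha hb X0 hG0 n i
    exact tendsto_nhds_unique t1 (tendsto_const_nhds.congr fun n => (t2 n).symm)
  have hcolLodd : ∀ j, colSum Lodd j = b' j := by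
    intro j
    have t1 : Tendsto (fun n => colSum (ipfp a b X0 (2*n+1)) j) atTop
        (nhds (colSum Lodd j)) := tendsto_finset_sum _ (fun i _ => hOddE i j)
    have t2 : Tendsto (fun n => colSum (ipfp a b X0 (2*n+1)) j) atTop
        (nhds (b j * (lamj j)⁻¹)) := by
      have h2 := (hClim j).const_mul (b j)
      have h3 : ∀ n, b j * Crat b (ipfp a b X0 (2*n+1)) j
          = colSum (ipfp a b X0 (2*n+1)) j := by
        intro n
        rw [Crat, mul_comm, div_mul_cancel₀ _ (ne_of_gt (hb j))]
      exact Tendsto.congr (fun n => h3 n) h2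
    rw [hb'' j, mul_comm]
    exact tendsto_nhds_unique t1 t2
  have htotLodd : ∑ i, ∑ j, Lodd i j = 1 := by
    rw [sum_sum_eq_rowSum, Finset.sum_congr rfl fun i _ => hrowLodd i]
    exact hsa
  -- totals of even iterates, entries ≤ 1
  have htotX : ∀ n, ∑ i, ∑ j, ipfp a b X0 (2*n) i j = 1 := by
    intro n
    cases n with
    | zero => exact hX0.2
    | succ m => rw [show 2*(m+1) = 2*m+2 from rfl,
        total_ipfp_even_succ ha hb X0 hG0 m]; exact hsb
  have hX1 : ∀ n i j, ipfp a b X0 (2*n) i j ≤ 1 := fun n i j =>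
    le_of_le_of_eq (entry_le_total _ (hnn (2*n)) i j) (htotX n)
  -- converse of G2
  have hmain : ∀ (i : Fin p) (j : Fin q) (S T : Matrix (Fin p) (Fin q) ℝ),
      (∀ i' j', 0 ≤ S i' j') → suppSubset S X0 →
      (∀ i' j', 0 ≤ T i' j') → (∀ i' j', 0 < T i' j' → 0 < Leven i' j') →
      (∀ i', rowSum S i' = rowSum T i') → (∀ j', colSum S j' = colSum T j') →
      0 < S i j → 0 < Leven i j := by
    intro i j S T hS0 hSsub hT0 hTposL hrow hcol hSij
    by_contra hc
    have hLev0 : Leven i j = 0 := le_antisymm (not_lt.mp hc) (hL0 i j)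
    have hX0ij : 0 < X0 i j := hSsub i j hSij
    have hTX0 : ∀ i' j', 0 < T i' j' → 0 < X0 i' j' := fun i' j' h =>
      hLX0 i' j' (hTposL i' j' h)
    have hconst := relEnt_ipfp_const ha hb X0 hG0 S T hS0 hT0 hSsub hTX0 hrow hcol
    have hTlim : Tendsto (fun n => relEnt T (ipfp a b X0 (2*n))) atTop
        (nhds (relEnt T Leven)) :=
      relEnt_tendsto T Leven _ hT0 (fun i' j' => hEvenE i' j')
        (fun i' j' hT n => (hsupp (2*n) i' j').mpr (hTX0 i' j' hT)) hTposL
    have hSlim : Tendsto (fun n => relEnt S (ipfp a b X0 (2*n))) atTop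
        (nhds (relEnt T Leven + (relEnt S X0 - relEnt T X0))) := by
      have h1 := hTlim.add (tendsto_const_nhds (x := relEnt S X0 - relEnt T X0))
      refine h1.congr fun n => ?_
      have := hconst n
      linarith
    have hXijpos : ∀ n, 0 < ipfp a b X0 (2*n) i j := fun n => (hsupp _ i j).mpr hX0ij
    have hXij0 : Tendsto (fun n => ipfp a b X0 (2*n) i j) atTop (nhds 0) := by
      rw [← hLev0]; exact hEvenE i j
    have hloglim : Tendsto (fun n => Real.log (ipfp a b X0 (2*n) i j)) atTop atBot :=
      Real.tendsto_log_nhdsGT_zero.comp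
        (tendsto_nhdsWithin_iff.mpr ⟨hXij0, Filter.Eventually.of_forall fun n =>
          Set.mem_Ioi.mpr (hXijpos n)⟩)
    have hdiv : Tendsto (fun n => S i j * Real.log (S i j / ipfp a b X0 (2*n) i j)
        - ((q:ℝ) + p*q)) atTop atTop := by
      have hfun : ∀ n, S i j * Real.log (S i j / ipfp a b X0 (2*n) i j) - ((q:ℝ)+p*q)
          = (S i j * Real.log (S i j) - ((q:ℝ)+p*q))
            + S i j * (- Real.log (ipfp a b X0 (2*n) i j)) := by
        intro n
        rw [Real.log_div (ne_of_gt hSij) (ne_of_gt (hXijpos n))]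
        ring
      have h1 : Tendsto (fun n => - Real.log (ipfp a b X0 (2*n) i j)) atTop atTop :=
        tendsto_neg_atBot_atTop.comp hloglim
      have h2 : Tendsto (fun n => S i j * (- Real.log (ipfp a b X0 (2*n) i j)))
          atTop atTop := h1.const_mul_atTop hSij
      have h3 := tendsto_atTop_add_const_left _ (S i j * Real.log (S i j) - ((q:ℝ)+p*q)) h2
      exact h3.congr fun n => (hfun n).symm
    have hlow : ∀ n, S i j * Real.log (S i j / ipfp a b X0 (2*n) i j) - ((q:ℝ) + p*q)
        ≤ relEnt S (ipfp a b X0 (2*n)) := fun n =>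
      relEnt_lower S _ hS0 (hX1 n) i j (hXijpos n)
    exact (not_tendsto_atTop_of_tendsto_nhds hSlim) (tendsto_atTop_mono hlow hdiv)
  have hG2 : ∀ i j, (0 < Leven i j ↔
      ∃ S : Matrix (Fin p) (Fin q) ℝ,
        (memGammaSub a' b X0 S ∨ memGammaSub a b' X0 S) ∧ 0 < S i j) := by
    intro i j
    constructor
    · intro h
      exact ⟨Leven, Or.inl hLevenMem, h⟩
    · rintro ⟨S, hcase, hSij⟩
      rcases hcase with hS | hS
      · refine hmain i j S Leven hS.1.1.1 hS.2 hL0 (fun _ _ h => h) ?_ ?_ hSij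
        · intro i'
          rw [hS.1.2.1 i', hrowLeven i', ← ha'' i']
        · intro j'
          rw [hS.1.2.2 j', hcolLeven j']
      · refine hmain i j S Lodd hS.1.1.1 hS.2 hLodd0
          (fun i' j' h => (hG1 i' j').mpr h) ?_ ?_ hSij
        · intro i'
          rw [hS.1.2.1 i', hrowLodd i']
        · intro j'
          rw [hS.1.2.2 j', hcolLodd j']
  -- ===== Part 3 =====
  have hX0'supp : ∀ i j, (0 < X0' i j ↔ 0 < Leven i j) := by
    intro i j
    rw [hX0' i j]
    by_cases h : 0 < Leven i j
    · rw [if_pos h]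
      exact ⟨fun _ => h, fun _ => hLX0 i j h⟩
    · rw [if_neg h]
      exact ⟨fun hc => absurd hc (lt_irrefl 0), fun hc => absurd hc h⟩
  have hX0'0 : ∀ i j, 0 ≤ X0' i j := by
    intro i j
    rw [hX0' i j]
    by_cases h : 0 < Leven i j
    · rw [if_pos h]; exact le_of_lt (hLX0 i j h)
    · rw [if_neg h]
  have hX0'G0 : memGamma0 X0' := by
    refine ⟨hX0'0, fun i => ?_, fun j => ?_⟩
    · have hpos : 0 < rowSum Leven i := by
        rw [hrowLeven i]; exact mul_pos (hlamipos i) (ha i)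
      obtain ⟨j, hj⟩ := exists_pos_of_sum_pos _ hpos
      exact Finset.sum_pos' (fun j' _ => hX0'0 i j')
        ⟨j, Finset.mem_univ j, (hX0'supp i j).mpr hj⟩
    · have hpos : 0 < colSum Leven j := by rw [hcolLeven j]; exact hb j
      obtain ⟨i, hi⟩ := exists_pos_of_sum_pos _ hpos
      exact Finset.sum_pos' (fun i' _ => hX0'0 i' j)
        ⟨i, Finset.mem_univ i, (hX0'supp i j).mpr hi⟩
  have hYbas := ipfp_basics ha hb X0' hX0'G0
  have hYnn : ∀ n i j, 0 ≤ ipfp a b X0' n i j := fun n => (hYbas n).1.1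
  have hYsupp : ∀ n i j, (0 < ipfp a b X0' n i j ↔ 0 < Leven i j) :=
    fun n i j => ((hYbas n).2 i j).trans (hX0'supp i j)
  have hYtot : ∀ n, ∑ i, ∑ j, ipfp a b X0' (2*(n+1)) i j = 1 := by
    intro n
    rw [show 2*(n+1) = 2*n+2 from rfl, total_ipfp_even_succ ha hb X0' hX0'G0 n]
    exact hsb
  have hY1 : ∀ n i j, ipfp a b X0' (2*(n+1)) i j ≤ 1 := fun n i j =>
    le_of_le_of_eq (entry_le_total _ (hYnn _) i j) (hYtot n)
  have hLevensuppX0' : ∀ i j, 0 < Leven i j → 0 < X0' i j :=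
    fun i j h => (hX0'supp i j).mpr h
  have hRposY : ∀ n i, 0 < Rrat a (ipfp a b X0' n) i :=
    fun n i => div_pos ((hYbas n).1.2.1 i) (ha i)
  have hCposY : ∀ n j, 0 < Crat b (ipfp a b X0' n) j :=
    fun n j => div_pos ((hYbas n).1.2.2 j) (hb j)
  set K : ℝ := ∑ j, b j * Real.log (lamj j) with hKdef
  have hsumRtot : ∀ n, ∑ i, a i * Rrat a (ipfp a b X0' (2*(n+1))) i = 1 := by
    intro n
    have h1 : ∀ i, a i * Rrat a (ipfp a b X0' (2*(n+1))) i
        = rowSum (ipfp a b X0' (2*(n+1))) i := fun i => by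
      rw [Rrat, mul_comm, div_mul_cancel₀ _ (ne_of_gt (ha i))]
    rw [Finset.sum_congr rfl fun i _ => h1 i, ← sum_sum_eq_rowSum]
    exact hYtot n
  have hbC : ∀ n j, b j * Crat b (ipfp a b X0' (2*n+1)) j
      = colSum (ipfp a b X0' (2*n+1)) j := fun n j => by
    rw [Crat, mul_comm, div_mul_cancel₀ _ (ne_of_gt (hb j))]
  have hcswap : ∀ n, ∑ j, lamj j * colSum (ipfp a b X0' (2*n+1)) j = 1 := by
    intro n
    have h1 : ∑ j, lamj j * colSum (ipfp a b X0' (2*n+1)) j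
        = ∑ i, ∑ j, lamj j * ipfp a b X0' (2*n+1) i j := by
      rw [Finset.sum_comm (f := fun i j => lamj j * ipfp a b X0' (2*n+1) i j)]
      refine Finset.sum_congr rfl fun j _ => ?_
      rw [colSum, Finset.mul_sum]
    have h2 : ∀ i j, lamj j * ipfp a b X0' (2*n+1) i j
        = lami i * ipfp a b X0' (2*n+1) i j := by
      intro i j
      rcases lt_or_ge 0 (ipfp a b X0' (2*n+1) i j) with hpos | hle
      · rw [hclass i j ((hYsupp _ i j).mp hpos)]
      · rw [le_antisymm hle (hYnn _ i j), mul_zero, mul_zero]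
    have h3 : ∀ i, ∑ j, lami i * ipfp a b X0' (2*n+1) i j = lami i * a i := by
      intro i
      rw [← Finset.mul_sum]
      congr 1
      exact rowSum_ipfp_odd ha hb X0' hX0'G0 n i
    rw [h1,
      Finset.sum_congr rfl fun i _ => Finset.sum_congr rfl fun j _ => h2 i j,
      Finset.sum_congr rfl fun i _ => h3 i]
    exact hK1
  have hstepY : ∀ n, relEnt Leven (ipfp a b X0' (2*n+2)) = relEnt Leven (ipfp a b X0' (2*n))
      + ∑ i, rowSum Leven i * Real.log (Rrat a (ipfp a b X0' (2*n)) i)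
      + ∑ j, colSum Leven j * Real.log (Crat b (ipfp a b X0' (2*n+1)) j) :=
    fun n => relEnt_ipfp_step ha hb X0' hX0'G0 Leven hL0 hLevensuppX0' n
  have hArow : ∀ n, ∑ i, rowSum Leven i * Real.log (Rrat a (ipfp a b X0' (2*(n+1))) i)
      ≤ K := by
    intro n
    have hb1 : ∀ i, rowSum Leven i * Real.log (Rrat a (ipfp a b X0' (2*(n+1))) i)
        ≤ a i * Rrat a (ipfp a b X0' (2*(n+1))) i - lami i * a i
          + lami i * a i * Real.log (lami i) := by
      intro i
      have hlog := log_upper (hRposY (2*(n+1)) i) (hlamipos i)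
      have h0 : (0:ℝ) ≤ lami i * a i := le_of_lt (mul_pos (hlamipos i) (ha i))
      have hmul := mul_le_mul_of_nonneg_left hlog h0
      rw [hrowLeven i]
      have hexp : lami i * a i * (Rrat a (ipfp a b X0' (2*(n+1))) i / lami i - 1
          + Real.log (lami i))
          = a i * Rrat a (ipfp a b X0' (2*(n+1))) i - lami i * a i
            + lami i * a i * Real.log (lami i) := by
        field_simp [ne_of_gt (hlamipos i)]
      rw [hexp] at hmul
      exact hmul
    calc ∑ i, rowSum Leven i * Real.log (Rrat a (ipfp a b X0' (2*(n+1))) i)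
        ≤ ∑ i, (a i * Rrat a (ipfp a b X0' (2*(n+1))) i - lami i * a i
          + lami i * a i * Real.log (lami i)) := Finset.sum_le_sum fun i _ => hb1 i
    _ = (∑ i, a i * Rrat a (ipfp a b X0' (2*(n+1))) i) - (∑ i, lami i * a i)
        + ∑ i, lami i * a i * Real.log (lami i) := by
        rw [Finset.sum_add_distrib, Finset.sum_sub_distrib]
    _ = 1 - 1 + K := by rw [hsumRtot n, hK1, hK2]
    _ = K := by ring
  have hBcol : ∀ n, ∑ j, colSum Leven j * Real.log (Crat b (ipfp a b X0' (2*n+1)) j)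
      ≤ -K := by
    intro n
    have hb1 : ∀ j, colSum Leven j * Real.log (Crat b (ipfp a b X0' (2*n+1)) j)
        ≤ lamj j * (b j * Crat b (ipfp a b X0' (2*n+1)) j) - b j
          - b j * Real.log (lamj j) := by
      intro j
      have hlog := log_upper (hCposY (2*n+1) j) (inv_pos.mpr (hlamjpos j))
      rw [div_inv_eq_mul, Real.log_inv] at hlog
      have hmul := mul_le_mul_of_nonneg_left hlog (le_of_lt (hb j))
      rw [hcolLeven j]
      have hexp : b j * (Crat b (ipfp a b X0' (2*n+1)) j * lamj j - 1
          + -Real.log (lamj j))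
          = lamj j * (b j * Crat b (ipfp a b X0' (2*n+1)) j) - b j
            - b j * Real.log (lamj j) := by ring
      rw [hexp] at hmul
      exact hmul
    calc ∑ j, colSum Leven j * Real.log (Crat b (ipfp a b X0' (2*n+1)) j)
        ≤ ∑ j, (lamj j * (b j * Crat b (ipfp a b X0' (2*n+1)) j) - b j
          - b j * Real.log (lamj j)) := Finset.sum_le_sum fun j _ => hb1 j
    _ = (∑ j, lamj j * (b j * Crat b (ipfp a b X0' (2*n+1)) j)) - (∑ j, b j) - K := by
        rw [Finset.sum_sub_distrib, Finset.sum_sub_distrib]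
    _ = 1 - 1 - K := by
        rw [Finset.sum_congr rfl fun j _ => by rw [hbC n j], hcswap n, hsb]
    _ = -K := by ring
  have hf1mono : ∀ n, relEnt Leven (ipfp a b X0' (2*((n+1)+1)))
      ≤ relEnt Leven (ipfp a b X0' (2*(n+1))) := by
    intro n
    show relEnt Leven (ipfp a b X0' (2*(n+1)+2)) ≤ relEnt Leven (ipfp a b X0' (2*(n+1)))
    have hstep := hstepY (n+1)
    have hA := hArow n
    have hB := hBcol (n+1)
    linarith
  have hf1anti : Antitone (fun n => relEnt Leven (ipfp a b X0' (2*(n+1)))) :=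
    antitone_nat_of_succ_le fun n => hf1mono n
  have hf1lb : ∀ n, 0 ≤ relEnt Leven (ipfp a b X0' (2*(n+1))) := by
    intro n
    have h1 := relEnt_ge_sub Leven (ipfp a b X0' (2*(n+1))) hL0 (hYnn _)
      (fun i j h => (hYsupp _ i j).mpr h)
    rw [htotLeven, hYtot n] at h1
    linarith
  obtain ⟨c, hc⟩ : ∃ c, Tendsto (fun n => relEnt Leven (ipfp a b X0' (2*(n+1)))) atTop
      (nhds c) :=
    ⟨_, tendsto_atTop_ciInf hf1anti ⟨0, by rintro x ⟨n, rfl⟩; exact hf1lb n⟩⟩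
  have hABlim : Tendsto (fun n =>
      (∑ i, rowSum Leven i * Real.log (Rrat a (ipfp a b X0' (2*(n+1))) i))
      + ∑ j, colSum Leven j * Real.log (Crat b (ipfp a b X0' (2*(n+1)+1)) j)) atTop
      (nhds 0) := by
    have h1 : Tendsto (fun n => relEnt Leven (ipfp a b X0' (2*((n+1)+1)))
        - relEnt Leven (ipfp a b X0' (2*(n+1)))) atTop (nhds (c - c)) :=
      (hc.comp (tendsto_add_atTop_nat 1)).sub hc
    rw [sub_self] at h1
    refine h1.congr fun n => ?_
    show relEnt Leven (ipfp a b X0' (2*(n+1)+2)) - relEnt Leven (ipfp a b X0' (2*(n+1))) = _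
    have hstep := hstepY (n+1)
    linarith
  have hKA : Tendsto (fun n =>
      K - ∑ i, rowSum Leven i * Real.log (Rrat a (ipfp a b X0' (2*(n+1))) i)) atTop
      (nhds 0) := by
    have hneg : Tendsto (fun n =>
        -((∑ i, rowSum Leven i * Real.log (Rrat a (ipfp a b X0' (2*(n+1))) i))
        + ∑ j, colSum Leven j * Real.log (Crat b (ipfp a b X0' (2*(n+1)+1)) j)))
        atTop (nhds 0) := by
      have h2 := hABlim.neg
      rw [neg_zero] at h2
      exact h2.congr fun n => by ring
    refine squeeze_zero (fun n => by have := hArow n; linarith)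
      (fun n => ?_) hneg
    have := hBcol (n+1)
    linarith
  have hYR : ∀ i, Tendsto (fun n => Rrat a (ipfp a b X0' (2*(n+1))) i) atTop
      (nhds (lami i)) := by
    set s : Fin p → ℕ → ℝ := fun i n =>
      lami i * a i * (Rrat a (ipfp a b X0' (2*(n+1))) i / lami i - 1
        - Real.log (Rrat a (ipfp a b X0' (2*(n+1))) i / lami i)) with hs
    have hs0 : ∀ i n, 0 ≤ s i n := by
      intro i n
      have ht : 0 < Rrat a (ipfp a b X0' (2*(n+1))) i / lami i :=
        div_pos (hRposY _ i) (hlamipos i)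
      have hlog := Real.log_le_sub_one_of_pos ht
      have hw : (0:ℝ) ≤ lami i * a i := le_of_lt (mul_pos (hlamipos i) (ha i))
      simp only [hs]
      exact mul_nonneg hw (by linarith)
    have hsum : ∀ n, ∑ i', s i' n
        = K - ∑ i', rowSum Leven i' * Real.log (Rrat a (ipfp a b X0' (2*(n+1))) i') := by
      intro n
      have hterm : ∀ i', s i' n
          = (a i' * Rrat a (ipfp a b X0' (2*(n+1))) i' - lami i' * a i'
            + lami i' * a i' * Real.log (lami i'))
            - rowSum Leven i' * Real.log (Rrat a (ipfp a b X0' (2*(n+1))) i') := by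
        intro i'
        rw [hrowLeven i']
        simp only [hs]
        rw [Real.log_div (ne_of_gt (hRposY _ i')) (ne_of_gt (hlamipos i'))]
        field_simp [ne_of_gt (hlamipos i')]
        ring
      rw [Finset.sum_congr rfl fun i' _ => hterm i', Finset.sum_sub_distrib,
        Finset.sum_add_distrib, Finset.sum_sub_distrib, hsumRtot n, hK1, hK2]
      ring
    intro i
    have hsi : Tendsto (fun n => s i n) atTop (nhds 0) := by
      refine squeeze_zero (fun n => hs0 i n) (fun n => ?_) hKA
      rw [← hsum n]
      exact Finset.single_le_sum (fun i' _ => hs0 i' n) (Finset.mem_univ i)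
    have hw : 0 < lami i * a i := mul_pos (hlamipos i) (ha i)
    have hglim : Tendsto (fun n => Rrat a (ipfp a b X0' (2*(n+1))) i / lami i - 1
        - Real.log (Rrat a (ipfp a b X0' (2*(n+1))) i / lami i)) atTop (nhds 0) := by
      have h2 := hsi.const_mul (lami i * a i)⁻¹
      rw [mul_zero] at h2
      refine h2.congr fun n => ?_
      simp only [hs]
      rw [inv_mul_cancel_left₀ (ne_of_gt hw)]
    have htend := tendsto_one_of_sub_log
      (fun n => Rrat a (ipfp a b X0' (2*(n+1))) i / lami i)
      (fun n => div_pos (hRposY _ i) (hlamipos i)) hglim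
    have h3 := htend.const_mul (lami i)
    rw [mul_one] at h3
    refine h3.congr fun n => ?_
    rw [mul_comm, div_mul_cancel₀ _ (ne_of_gt (hlamipos i))]
  have hkey : ∀ (σ : ℕ → ℕ), (∀ n, 1 ≤ σ n) → Tendsto σ atTop atTop →
      ∀ M : Matrix (Fin p) (Fin q) ℝ,
      Tendsto (fun n => ipfp a b X0' (2 * σ n)) atTop (nhds M) → M = Leven := by
    intro σ hσ1 hσtop M hM
    have hMe : ∀ i j, Tendsto (fun n => ipfp a b X0' (2 * σ n) i j) atTop
        (nhds (M i j)) := fun i j => (tendsto_pi_nhds.mp ((tendsto_pi_nhds.mp hM) i)) j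
    have hM0 : ∀ i j, 0 ≤ M i j := fun i j =>
      ge_of_tendsto (hMe i j) (Filter.Eventually.of_forall fun n => hYnn _ i j)
    have hMoff : ∀ i j, ¬ 0 < Leven i j → M i j = 0 := by
      intro i j h
      have hzero : ∀ n, ipfp a b X0' (2*σ n) i j = 0 := by
        intro n
        have hnp : ¬ 0 < ipfp a b X0' (2*σ n) i j := fun hc => h ((hYsupp _ i j).mp hc)
        exact le_antisymm (not_lt.mp hnp) (hYnn _ i j)
      exact tendsto_nhds_unique (hMe i j)
        (tendsto_const_nhds.congr fun n => (hzero n).symm)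
    have hMposL : ∀ i j, 0 < M i j → 0 < Leven i j := by
      intro i j h
      by_contra hc
      rw [hMoff i j hc] at h
      exact lt_irrefl 0 h
    have hσeq : ∀ n, 2 * σ n = 2 * ((σ n - 1) + 1) := fun n => by
      have := hσ1 n; omega
    have hσ'top : Tendsto (fun n => σ n - 1) atTop atTop :=
      (tendsto_sub_atTop_nat 1).comp hσtop
    have hRσ : ∀ i, Tendsto (fun n => Rrat a (ipfp a b X0' (2 * σ n)) i) atTop
        (nhds (lami i)) := by
      intro i
      have h1 := (hYR i).comp hσ'top
      refine h1.congr fun n => ?_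
      exact congrArg (fun m => Rrat a (ipfp a b X0' m) i) (hσeq n).symm
    have hMrow : ∀ i, rowSum M i = lami i * a i := by
      intro i
      have t1 : Tendsto (fun n => rowSum (ipfp a b X0' (2*σ n)) i) atTop
          (nhds (rowSum M i)) := tendsto_finset_sum _ (fun j _ => hMe i j)
      have t2 : Tendsto (fun n => rowSum (ipfp a b X0' (2*σ n)) i) atTop
          (nhds (lami i * a i)) := by
        have h2 := (hRσ i).const_mul (a i)
        have h3 : ∀ n, a i * Rrat a (ipfp a b X0' (2*σ n)) i
            = rowSum (ipfp a b X0' (2*σ n)) i := fun n => by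
          rw [Rrat, mul_comm, div_mul_cancel₀ _ (ne_of_gt (ha i))]
        rw [show lami i * a i = a i * lami i from mul_comm _ _]
        exact Tendsto.congr h3 h2
      exact tendsto_nhds_unique t1 t2
    have hMcol : ∀ j, colSum M j = b j := by
      intro j
      have t1 : Tendsto (fun n => colSum (ipfp a b X0' (2*σ n)) j) atTop
          (nhds (colSum M j)) := tendsto_finset_sum _ (fun i _ => hMe i j)
      have t2 : ∀ n, colSum (ipfp a b X0' (2*σ n)) j = b j := by
        intro n
        rw [hσeq n]
        exact colSum_ipfp_even ha hb X0' hX0'G0 (σ n - 1) j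
      exact tendsto_nhds_unique t1 (tendsto_const_nhds.congr fun n => (t2 n).symm)
    have hMtot : ∑ i, ∑ j, M i j = 1 := by
      rw [sum_sum_eq_rowSum, Finset.sum_congr rfl fun i _ => hMrow i]
      exact hK1
    have hMpos : ∀ i j, 0 < Leven i j → 0 < M i j := by
      intro i j hL
      by_contra hc
      have hMij : M i j = 0 := le_antisymm (not_lt.mp hc) (hM0 i j)
      have hYpos : ∀ n, 0 < ipfp a b X0' (2*σ n) i j := fun n => (hYsupp _ i j).mpr hL
      have hY0 : Tendsto (fun n => ipfp a b X0' (2*σ n) i j) atTop (nhds 0) := by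
        rw [← hMij]; exact hMe i j
      have hloglim : Tendsto (fun n => Real.log (ipfp a b X0' (2*σ n) i j)) atTop atBot :=
        Real.tendsto_log_nhdsGT_zero.comp
          (tendsto_nhdsWithin_iff.mpr ⟨hY0, Filter.Eventually.of_forall fun n =>
            Set.mem_Ioi.mpr (hYpos n)⟩)
      have hdiv : Tendsto (fun n =>
          Leven i j * Real.log (Leven i j / ipfp a b X0' (2*σ n) i j)
          - ((q:ℝ) + p*q)) atTop atTop := by
        have hfun : ∀ n, Leven i j * Real.log (Leven i j / ipfp a b X0' (2*σ n) i j)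
            - ((q:ℝ)+p*q)
            = (Leven i j * Real.log (Leven i j) - ((q:ℝ)+p*q))
              + Leven i j * (- Real.log (ipfp a b X0' (2*σ n) i j)) := by
          intro n
          rw [Real.log_div (ne_of_gt hL) (ne_of_gt (hYpos n))]
          ring
        have h1 : Tendsto (fun n => - Real.log (ipfp a b X0' (2*σ n) i j)) atTop atTop :=
          tendsto_neg_atBot_atTop.comp hloglim
        have h2 := h1.const_mul_atTop hL
        have h3 := tendsto_atTop_add_const_left _
          (Leven i j * Real.log (Leven i j) - ((q:ℝ)+p*q)) h2
        exact h3.congr fun n => (hfun n).symm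
      have hlow : ∀ n, Leven i j * Real.log (Leven i j / ipfp a b X0' (2*σ n) i j)
          - ((q:ℝ) + p*q) ≤ relEnt Leven (ipfp a b X0' (2*σ n)) := by
        intro n
        refine relEnt_lower Leven _ hL0 (fun i' j' => ?_) i j (hYpos n)
        rw [hσeq n]
        exact hY1 (σ n - 1) i' j'
      have hub : ∀ n, relEnt Leven (ipfp a b X0' (2*σ n))
          ≤ relEnt Leven (ipfp a b X0' (2*(0+1))) := by
        intro n
        have h1 : relEnt Leven (ipfp a b X0' (2*((σ n - 1)+1)))
            ≤ relEnt Leven (ipfp a b X0' (2*(0+1))) := hf1anti (Nat.zero_le _)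
        rw [hσeq n]
        exact h1
      have hT := tendsto_atTop_mono hlow hdiv
      obtain ⟨n, hn⟩ := (hT.eventually_gt_atTop
        (relEnt Leven (ipfp a b X0' (2*(0+1))))).exists
      exact absurd (hub n) (not_le.mpr hn)
    have hMsuppX0' : ∀ i j, 0 < M i j → 0 < X0' i j :=
      fun i j h => (hX0'supp i j).mpr (hMposL i j h)
    have hconstY := relEnt_ipfp_const ha hb X0' hX0'G0 M Leven hM0 hL0 hMsuppX0'
      hLevensuppX0' (fun i => by rw [hMrow i, hrowLeven i])
      (fun j => by rw [hMcol j, hcolLeven j])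
    have hMM : Tendsto (fun n => relEnt M (ipfp a b X0' (2*σ n))) atTop
        (nhds (relEnt M M)) :=
      relEnt_tendsto M M _ hM0 hMe (fun i j h n => (hYsupp _ i j).mpr (hMposL i j h))
        (fun i j h => h)
    have hLM : Tendsto (fun n => relEnt Leven (ipfp a b X0' (2*σ n))) atTop
        (nhds (relEnt Leven M)) :=
      relEnt_tendsto Leven M _ hL0 hMe (fun i j h n => (hYsupp _ i j).mpr h) hMpos
    have hκY : relEnt M X0' - relEnt Leven X0' = relEnt M M - relEnt Leven M :=
      tendsto_nhds_unique
        (tendsto_const_nhds.congr fun n => (hconstY (σ n)).symm) (hMM.sub hLM)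
    have hMsuppX0 : ∀ i j, 0 < M i j → 0 < X0 i j :=
      fun i j h => hLX0 i j (hMposL i j h)
    have hconstX := relEnt_ipfp_const ha hb X0 hG0 M Leven hM0 hL0 hMsuppX0 hLX0
      (fun i => by rw [hMrow i, hrowLeven i]) (fun j => by rw [hMcol j, hcolLeven j])
    have hMLev : Tendsto (fun n => relEnt M (ipfp a b X0 (2*n))) atTop
        (nhds (relEnt M Leven)) :=
      relEnt_tendsto M Leven _ hM0 (fun i j => hEvenE i j)
        (fun i j h n => (hsupp _ i j).mpr (hMsuppX0 i j h)) hMposL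
    have hLLev : Tendsto (fun n => relEnt Leven (ipfp a b X0 (2*n))) atTop
        (nhds (relEnt Leven Leven)) :=
      relEnt_tendsto Leven Leven _ hL0 (fun i j => hEvenE i j)
        (fun i j h n => (hsupp _ i j).mpr (hLX0 i j h)) (fun i j h => h)
    have hκX : relEnt M X0 - relEnt Leven X0 = relEnt M Leven - relEnt Leven Leven :=
      tendsto_nhds_unique
        (tendsto_const_nhds.congr fun n => (hconstX n).symm) (hMLev.sub hLLev)
    have hcongr : ∀ W : Matrix (Fin p) (Fin q) ℝ, (∀ i j, 0 ≤ W i j) →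
        (∀ i j, 0 < W i j → 0 < Leven i j) → relEnt W X0' = relEnt W X0 := by
      intro W hW0 hWL
      unfold relEnt
      refine Finset.sum_congr rfl fun i _ => Finset.sum_congr rfl fun j _ => ?_
      by_cases h : 0 < Leven i j
      · rw [hX0' i j, if_pos h]
      · have hW : W i j = 0 := by
          by_contra hc
          exact h (hWL i j (lt_of_le_of_ne (hW0 i j) (Ne.symm hc)))
        have hX0'np : ¬ 0 < X0' i j := fun hc => h ((hX0'supp i j).mp hc)
        rw [if_neg hX0'np, hW]
        by_cases h2 : 0 < X0 i j
        · rw [if_pos h2, zero_mul]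
        · rw [if_neg h2]
    rw [hcongr M hM0 hMposL, hcongr Leven hL0 (fun _ _ h => h), relEnt_self M] at hκY
    rw [relEnt_self Leven] at hκX
    have hge1 : 0 ≤ relEnt M Leven := by
      have h1 := relEnt_ge_sub M Leven hM0 hL0 hMposL
      rw [hMtot, htotLeven] at h1
      linarith
    have hge2 : 0 ≤ relEnt Leven M := by
      have h1 := relEnt_ge_sub Leven M hL0 hM0 hMpos
      rw [htotLeven, hMtot] at h1
      linarith
    have hz : relEnt M Leven = 0 := by linarith
    have hnonneg : ∀ i j, 0 ≤ (if 0 < Leven i j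
        then M i j * Real.log (M i j / Leven i j) else 0) - (M i j - Leven i j) := by
      intro i j
      by_cases h : 0 < Leven i j
      · rw [if_pos h]
        have := klogk_lower h (hM0 i j)
        linarith
      · rw [if_neg h, hMoff i j h,
          le_antisymm (not_lt.mp h) (hL0 i j)]
        norm_num
    have hsumz : ∑ i, ∑ j, ((if 0 < Leven i j
        then M i j * Real.log (M i j / Leven i j) else 0) - (M i j - Leven i j)) = 0 := by
      have e1 : ∑ i, ∑ j, ((if 0 < Leven i j
          then M i j * Real.log (M i j / Leven i j) else 0) - (M i j - Leven i j))
          = relEnt M Leven - ((∑ i, ∑ j, M i j) - (∑ i, ∑ j, Leven i j)) := by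
        unfold relEnt
        rw [← Finset.sum_sub_distrib, ← Finset.sum_sub_distrib]
        refine Finset.sum_congr rfl fun i _ => ?_
        rw [← Finset.sum_sub_distrib, ← Finset.sum_sub_distrib]
      rw [e1, hz, hMtot, htotLeven]
      ring
    have hterm0 : ∀ i j, (if 0 < Leven i j
        then M i j * Real.log (M i j / Leven i j) else 0) - (M i j - Leven i j) = 0 := by
      intro i j
      have h1 := (Finset.sum_eq_zero_iff_of_nonneg
        (fun i _ => Finset.sum_nonneg fun j _ => hnonneg i j)).mp hsumz i
        (Finset.mem_univ i)
      exact (Finset.sum_eq_zero_iff_of_nonneg (fun j _ => hnonneg i j)).mp h1 j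
        (Finset.mem_univ j)
    funext i j
    by_cases h : 0 < Leven i j
    · have h1 := hterm0 i j
      rw [if_pos h] at h1
      exact klogk_eq h (hMpos i j h) (by linarith)
    · rw [hMoff i j h, le_antisymm (not_lt.mp h) (hL0 i j)]
  have hfinEven : Tendsto (fun n => ipfp a b X0' (2 * n)) atTop (nhds Leven) := by
    apply tendsto_of_subseq_tendsto
    intro ns hns
    obtain ⟨N, hN⟩ := Filter.eventually_atTop.mp (hns.eventually_ge_atTop 1)
    have hmem : ∀ k, (ipfp a b X0' (2 * ns (k + N)) : Fin p → Fin q → ℝ)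
        ∈ Set.Icc (0 : Fin p → Fin q → ℝ) 1 := by
      intro k
      have h1 : 1 ≤ ns (k + N) := hN (k + N) (Nat.le_add_left _ _)
      refine ⟨fun i j => hYnn _ i j, fun i j => ?_⟩
      rw [show 2 * ns (k + N) = 2 * ((ns (k + N) - 1) + 1) from by omega]
      exact hY1 (ns (k + N) - 1) i j
    obtain ⟨M, _, φ, hφ, hφlim⟩ :=
      (isCompact_Icc (a := (0 : Fin p → Fin q → ℝ)) (b := 1)).tendsto_subseq hmem
    have hσ1 : ∀ k, 1 ≤ ns (φ k + N) := fun k => hN _ (Nat.le_add_left _ _)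
    have hσtop : Tendsto (fun k => ns (φ k + N)) atTop atTop :=
      hns.comp (tendsto_atTop_mono (fun k => Nat.le_add_right _ _) hφ.tendsto_atTop)
    have hlim : Tendsto (fun k => ipfp a b X0' (2 * ns (φ k + N))) atTop (nhds M) :=
      hφlim
    have hMeq := hkey (fun k => ns (φ k + N)) hσ1 hσtop M hlim
    rw [hMeq] at hlim
    exact ⟨fun k => φ k + N, hlim⟩
  have hYRfull : ∀ i, Tendsto (fun n => Rrat a (ipfp a b X0' (2*n)) i) atTop
      (nhds (lami i)) := fun i => (tendsto_add_atTop_iff_nat 1).mp (hYR i)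
  have hfinOdd : Tendsto (fun n => ipfp a b X0' (2 * n + 1)) atTop (nhds Lodd) := by
    apply tendsto_pi_nhds.mpr
    intro i
    apply tendsto_pi_nhds.mpr
    intro j
    have h1 : Tendsto (fun n => ipfp a b X0' (2*n) i j) atTop (nhds (Leven i j)) :=
      (tendsto_pi_nhds.mp ((tendsto_pi_nhds.mp hfinEven) i)) j
    have h2 := h1.div (hYRfull i) (ne_of_gt (hlamipos i))
    rw [show Lodd i j = Leven i j / lami i from hLoddEq i j]
    refine h2.congr fun n => ?_
    rw [ipfp_even_succ]
    rfl
  exact ⟨hG1, hG2, hfinEven, hfinOdd⟩
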